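/- Let H be a complex Hilbert space and let 𝒜 be a norm-closed star-subalgebra of the algebra of bounded linear operators on H. Let P and Q be orthogonal projections belonging to 𝒜, and let T ∈ 𝒜 satisfy Q∘T∘P = T, T is injective on the range of P, and T maps the range of P onto the range of Q. Then P and Q are Murray–von Neumann equivalent in 𝒜: there exists V ∈ 𝒜 with V*∘V = P and V∘V* = Q. -/

import Mathlib

open scoped InnerProductSpace


/-- A coercive self-adjoint operator on a complex Hilbert space is invertible. -/
lemma aux_isUnit_of_coercive {H : Type*} [NormedAddCommGroup H] [InnerProductSpace ℂ H]
    [CompleteSpace H] (S : H →L[ℂ] H) {m : ℝ} (hm : 0 < m)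
    (hco : ∀ v : H, m * ‖v‖ ^ 2 ≤ (inner ℂ (S v) v : ℂ).re) : IsUnit S := by
  have hb : ∀ v, m * ‖v‖ ≤ ‖S v‖ := by
    intro v
    rcases eq_or_ne v 0 with rfl | hv
    · simp
    have h1 : (inner ℂ (S v) v : ℂ).re ≤ ‖S v‖ * ‖v‖ := by
      calc (inner ℂ (S v) v : ℂ).re ≤ ‖(inner ℂ (S v) v : ℂ)‖ := Complex.re_le_norm _
        _ = ‖(inner ℂ (S v) v : ℂ)‖ := rfl
        _ ≤ ‖S v‖ * ‖v‖ := norm_inner_le_norm _ _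
    have h2 : m * ‖v‖ * ‖v‖ ≤ ‖S v‖ * ‖v‖ := by
      have := (hco v).trans h1
      nlinarith [norm_nonneg v, norm_nonneg (S v)]
    exact le_of_mul_le_mul_right h2 (norm_pos_iff.mpr hv)
  have hker : LinearMap.ker (S : H →ₗ[ℂ] H) = ⊥ := by
    rw [Submodule.eq_bot_iff]
    intro x hx
    have hx0 : S x = 0 := hx
    have := hb x
    rw [hx0, norm_zero] at this
    have hx1 : ‖x‖ ≤ 0 := by nlinarith [norm_nonneg x]
    simpa using le_antisymm hx1 (norm_nonneg x)
  have hrange : LinearMap.range (S : H →ₗ[ℂ] H) = ⊤ := by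
    have hclosed : IsClosed (LinearMap.range (S : H →ₗ[ℂ] H) : Set H) := by
      have hal : AntilipschitzWith (⟨m, hm.le⟩ : NNReal)⁻¹ S :=
        S.antilipschitz_of_bound (K := (⟨m, hm.le⟩ : NNReal)⁻¹) fun x => by
          have hx := hb x
          change ‖x‖ ≤ m⁻¹ * ‖S x‖
          rw [inv_mul_eq_div, le_div_iff₀ hm]
          linarith [hb x]
      have : Set.range S = (LinearMap.range (S : H →ₗ[ℂ] H) : Set H) := by
        ext x; simp [LinearMap.mem_range, Set.mem_range]
      rw [← this]
      exact hal.isClosed_range S.uniformContinuous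
    haveI : CompleteSpace (LinearMap.range (S : H →ₗ[ℂ] H)) := hclosed.completeSpace_coe
    have hcomp : (LinearMap.range (S : H →ₗ[ℂ] H))ᗮ = ⊥ := by
      rw [Submodule.eq_bot_iff]
      intro v hv
      have h0 : (inner ℂ (S v) v : ℂ) = 0 := hv (S v) (LinearMap.mem_range_self _ v)
      have h2 := hco v
      rw [h0] at h2
      simp only [Complex.zero_re] at h2
      by_contra hne
      have : 0 < ‖v‖ := norm_pos_iff.mpr hne
      nlinarith [mul_pos hm (pow_pos this 2)]
    exact Submodule.orthogonal_eq_bot_iff.mp hcomp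
  refine ⟨⟨S, ((ContinuousLinearEquiv.ofBijective S hker hrange).symm : H →L[ℂ] H), ?_, ?_⟩, rfl⟩
  · ext x
    simpa [ContinuousLinearMap.mul_apply] using
      ContinuousLinearEquiv.ofBijective_apply_symm_apply S hker hrange x
  · ext x
    simpa [ContinuousLinearMap.mul_apply] using
      ContinuousLinearEquiv.ofBijective_symm_apply_apply S hker hrange x


lemma aux_bounded_below {H : Type*} [NormedAddCommGroup H] [InnerProductSpace ℂ H]
    [CompleteSpace H] (P Q T : H →L[ℂ] H)
    (hPproj : P * P = P) (hQproj : Q * Q = Q) (hQT : Q * T = T)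
    (hinj : Set.InjOn T (Set.range P))
    (honto : T '' Set.range P = Set.range Q) :
    ∃ c : ℝ, 0 < c ∧ ∀ x : H, P x = x → c * ‖x‖ ≤ ‖T x‖ := by
  set Kp : Submodule ℂ H := LinearMap.range (P : H →ₗ[ℂ] H) with hKp
  set Kq : Submodule ℂ H := LinearMap.range (Q : H →ₗ[ℂ] H) with hKq
  have hmemp : ∀ x : H, x ∈ Kp ↔ P x = x := by
    intro x
    constructor
    · rintro ⟨y, rfl⟩
      have := congrArg (fun S : H →L[ℂ] H => S y) hPproj
      simpa using this
    · intro hx; exact ⟨x, hx⟩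
  have hmemq : ∀ x : H, x ∈ Kq ↔ Q x = x := by
    intro x
    constructor
    · rintro ⟨y, rfl⟩
      have := congrArg (fun S : H →L[ℂ] H => S y) hQproj
      simpa using this
    · intro hx; exact ⟨x, hx⟩
  have hclp : IsClosed (Kp : Set H) := by
    have : (Kp : Set H) = {x | P x = x} := Set.ext fun x => hmemp x
    rw [this]
    exact isClosed_eq P.continuous continuous_id
  have hclq : IsClosed (Kq : Set H) := by
    have : (Kq : Set H) = {x | Q x = x} := Set.ext fun x => hmemq x
    rw [this]
    exact isClosed_eq Q.continuous continuous_id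
  haveI : CompleteSpace Kp := hclp.completeSpace_coe
  haveI : CompleteSpace Kq := hclq.completeSpace_coe
  have hmaps : ∀ x : Kp, T x ∈ Kq := by
    intro x
    rw [hmemq]
    have := congrArg (fun S : H →L[ℂ] H => S (x : H)) hQT
    simpa using this
  set T' : Kp →L[ℂ] Kq := (T.comp Kp.subtypeL).codRestrict Kq hmaps with hT'
  have hT'app : ∀ x : Kp, (T' x : H) = T x := fun x => rfl
  have hrangeP : (Kp : Set H) = Set.range P := by
    ext x; simp [hKp, LinearMap.mem_range, Set.mem_range]
  have hker' : LinearMap.ker (T' : Kp →ₗ[ℂ] Kq) = ⊥ := by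
    rw [Submodule.eq_bot_iff]
    intro x hx
    have hx0 : (T' x : H) = 0 := congrArg Subtype.val (show T' x = 0 from hx)
    rw [hT'app] at hx0
    have hxm : (x : H) ∈ Set.range P := by rw [← hrangeP]; exact x.2
    have h0m : (0 : H) ∈ Set.range P := ⟨0, map_zero P⟩
    have := hinj hxm h0m (by simpa using hx0)
    exact Subtype.ext this
  have hrange' : LinearMap.range (T' : Kp →ₗ[ℂ] Kq) = ⊤ := by
    rw [Submodule.eq_top_iff']
    intro y
    have hy : (y : H) ∈ Set.range Q := by
      have : (Kq : Set H) = Set.range Q := by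
        ext x; simp [hKq, LinearMap.mem_range, Set.mem_range]
      rw [← this]; exact y.2
    rw [← honto] at hy
    obtain ⟨x, hxm, hxy⟩ := hy
    refine ⟨⟨x, by rwa [← hrangeP] at hxm⟩, ?_⟩
    exact Subtype.ext (by simpa [hT'app] using hxy)
  set e := ContinuousLinearEquiv.ofBijective T' hker' hrange' with he
  refine ⟨(‖(e.symm : Kq →L[ℂ] Kp)‖ + 1)⁻¹, by positivity, ?_⟩
  intro x hx
  set xp : Kp := ⟨x, (hmemp x).mpr hx⟩ with hxp
  have h1 : ‖xp‖ ≤ ‖(e.symm : Kq →L[ℂ] Kp)‖ * ‖e xp‖ := by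
    conv_lhs => rw [← e.symm_apply_apply xp]
    exact (e.symm : Kq →L[ℂ] Kp).le_opNorm _
  have h2 : ‖e xp‖ = ‖T x‖ := by
    have : e xp = T' xp := by rw [he]; rfl
    rw [this]
    show ‖(T' xp : H)‖ = ‖T x‖
    rw [hT'app]
  have h3 : ‖xp‖ = ‖x‖ := rfl
  rw [h2, h3] at h1
  have hpos : (0:ℝ) < ‖(e.symm : Kq →L[ℂ] Kp)‖ + 1 := by positivity
  rw [inv_mul_le_iff₀ hpos] at *
  · nlinarith [norm_nonneg (T x), norm_nonneg x]


lemma aux_cfc_mem {H : Type*} [NormedAddCommGroup H] [InnerProductSpace ℂ H]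
    [CompleteSpace H] (𝒜 : StarSubalgebra ℂ (H →L[ℂ] H))
    (hcl : IsClosed (𝒜 : Set (H →L[ℂ] H))) (B : H →L[ℂ] H) (hB : B ∈ 𝒜)
    (hBsa : IsSelfAdjoint B) (f : ℝ → ℝ) (hf : ContinuousOn f (spectrum ℝ B)) :
    cfc f B ∈ 𝒜 := by
  haveI : IsClosed (𝒜 : Set (H →L[ℂ] H)) := hcl
  haveI : CompleteSpace 𝒜 := hcl.completeSpace_coe
  set b : 𝒜 := ⟨B, hB⟩ with hb
  have hbsa : IsSelfAdjoint b := Subtype.ext hBsa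
  have hspec : spectrum ℝ b = spectrum ℝ B := by
    ext x
    rw [← spectrum.algebraMap_mem_iff ℂ (A := 𝒜), ← spectrum.algebraMap_mem_iff ℂ
      (A := H →L[ℂ] H), StarSubalgebra.spectrum_eq]
  have hmap := StarAlgHom.map_cfc (S := ℂ) 𝒜.subtype f b (by rw [hspec]; exact hf)
    continuous_subtype_val hbsa hBsa
  have : (𝒜.subtype b : H →L[ℂ] H) = B := rfl
  rw [this] at hmap
  rw [← hmap]
  exact SetLike.coe_mem _


set_option maxHeartbeats 1000000 in
/-- **Murray–von Neumann equivalence from an intertwining operator.** Let `𝒜` be a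
norm-closed star-subalgebra of the bounded operators on a complex Hilbert space, let
`P, Q ∈ 𝒜` be orthogonal projections and let `T ∈ 𝒜` satisfy `Q∘T∘P = T`, `T` injective
on the range of `P` and `T(range P) = range Q`. Then `P` and `Q` are Murray–von Neumann
equivalent in `𝒜`: there is `V ∈ 𝒜` with `V*V = P` and `VV* = Q`. -/
theorem murray_von_neumann_equivalence {H : Type*} [NormedAddCommGroup H]
    [InnerProductSpace ℂ H] [CompleteSpace H]
    (𝒜 : StarSubalgebra ℂ (H →L[ℂ] H)) (h𝒜closed : IsClosed (𝒜 : Set (H →L[ℂ] H)))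
    (P Q T : H →L[ℂ] H) (hP : P ∈ 𝒜) (hQ : Q ∈ 𝒜) (hT : T ∈ 𝒜)
    (hPproj : P * P = P) (hPsa : IsSelfAdjoint P)
    (hQproj : Q * Q = Q) (hQsa : IsSelfAdjoint Q)
    (hQTP : Q * T * P = T)
    (hinj : Set.InjOn T (Set.range P))
    (honto : T '' Set.range P = Set.range Q) :
    ∃ V ∈ 𝒜, ContinuousLinearMap.adjoint V * V = P ∧
      V * ContinuousLinearMap.adjoint V = Q := by
  have hTP : T * P = T := by
    conv_lhs => rw [← hQTP, mul_assoc, hPproj]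
    exact hQTP
  have hQT : Q * T = T := by
    conv_lhs => rw [← hQTP, ← mul_assoc, ← mul_assoc, hQproj]
    exact hQTP
  obtain ⟨c, hc, hbb⟩ := aux_bounded_below P Q T hPproj hQproj hQT hinj honto
  set Tad := ContinuousLinearMap.adjoint T with hTad
  have hstarT : star T = Tad := ContinuousLinearMap.star_eq_adjoint T
  have hstarP : star P = P := hPsa
  have hstarQ : star Q = Q := hQsa
  set A := Tad * T with hA
  set B := A + 1 - P with hB
  have hAsa : IsSelfAdjoint A := by
    rw [hA, ← hstarT]
    exact IsSelfAdjoint.star_mul_self T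
  have hBsa : IsSelfAdjoint B := by
    rw [hB]
    exact ((hAsa.add (IsSelfAdjoint.one (R := H →L[ℂ] H))).sub hPsa)
  have hAP : A * P = A := by rw [hA, mul_assoc, hTP]
  have hPA : P * A = A := by
    have h1 : P * Tad = Tad := by
      have := congrArg star hTP
      rw [star_mul, hstarT, hstarP] at this
      exact this
    rw [hA, ← mul_assoc, h1]
  have hPB : P * B = A := by
    rw [hB, mul_sub, mul_add, hPA, mul_one, hPproj, add_sub_cancel_right]
  have hBP : B * P = A := by
    rw [hB, sub_mul, add_mul, hAP, one_mul, hPproj, add_sub_cancel_right]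
  set m := min (c ^ 2) 1 with hm
  have hmpos : 0 < m := lt_min (by positivity) one_pos
  -- coercivity of B
  have hco : ∀ v : H, m * ‖v‖ ^ 2 ≤ (inner ℂ (B v) v : ℂ).re := by
    intro v
    have hTv : T (P v) = T v := by
      have := congrArg (fun S : H →L[ℂ] H => S v) hTP
      simpa using this
    have hPPv : P (P v) = P v := by
      have := congrArg (fun S : H →L[ℂ] H => S v) hPproj
      simpa using this
    have hAvv : (inner ℂ (A v) v : ℂ).re = ‖T v‖ ^ 2 := by
      have : (inner ℂ (A v) v : ℂ) = inner ℂ (T v) (T v) := by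
        rw [hA]
        show (inner ℂ (Tad (T v)) v : ℂ) = inner ℂ (T v) (T v)
        rw [hTad, ContinuousLinearMap.adjoint_inner_left]
      rw [this, inner_self_eq_norm_sq_to_K]
      norm_cast
    have hPvv : (inner ℂ (P v) v : ℂ).re = ‖P v‖ ^ 2 := by
      have : (inner ℂ (P v) v : ℂ) = inner ℂ (P v) (P v) := by
        conv_lhs => rw [← hPPv]
        rw [← ContinuousLinearMap.adjoint_inner_left, ← ContinuousLinearMap.star_eq_adjoint,
          hstarP]
      rw [this, inner_self_eq_norm_sq_to_K]
      norm_cast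
    have hBvv : (inner ℂ (B v) v : ℂ).re = ‖T v‖ ^ 2 + ‖v‖ ^ 2 - ‖P v‖ ^ 2 := by
      have : (inner ℂ (B v) v : ℂ) = inner ℂ (A v) v + inner ℂ v v - inner ℂ (P v) v := by
        rw [hB]
        simp [ContinuousLinearMap.sub_apply, ContinuousLinearMap.add_apply,
          inner_sub_left, inner_add_left]
      rw [this]
      simp only [Complex.sub_re, Complex.add_re, hAvv, hPvv]
      rw [inner_self_eq_norm_sq_to_K]
      norm_cast
    have hsplit : ‖v‖ ^ 2 = ‖P v‖ ^ 2 + ‖v - P v‖ ^ 2 := by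
      have horth : (inner ℂ (P v) (v - P v) : ℂ) = 0 := by
        rw [inner_sub_right]
        have : (inner ℂ (P v) v : ℂ) = inner ℂ (P v) (P v) := by
          conv_lhs => rw [← hPPv]
          rw [← ContinuousLinearMap.adjoint_inner_left, ← ContinuousLinearMap.star_eq_adjoint,
            hstarP]
        rw [this, sub_self]
      have hv : v = P v + (v - P v) := by abel
      have hns := norm_add_sq (𝕜 := ℂ) (P v) (v - P v)
      rw [horth, ← hv] at hns
      simpa using hns
    have hTbig : c ^ 2 * ‖P v‖ ^ 2 ≤ ‖T v‖ ^ 2 := by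
      have h1 : c * ‖P v‖ ≤ ‖T (P v)‖ := hbb (P v) hPPv
      rw [hTv] at h1
      have h2 := mul_le_mul h1 h1 (by positivity) (norm_nonneg _)
      nlinarith [norm_nonneg (P v), norm_nonneg (T v), hc.le]
    rw [hBvv]
    have h1 : m ≤ c ^ 2 := min_le_left _ _
    have h2 : m ≤ 1 := min_le_right _ _
    nlinarith [sq_nonneg ‖P v‖, sq_nonneg ‖v - P v‖, hsplit]
  have hBunit : IsUnit B := aux_isUnit_of_coercive B hmpos hco
  -- spectrum of B is contained in [m, ∞)
  have hspecB : ∀ x ∈ spectrum ℝ B, m ≤ x := by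
    intro x hx
    by_contra hlt
    push_neg at hlt
    have hunit : IsUnit (B - algebraMap ℝ (H →L[ℂ] H) x) := by
      apply aux_isUnit_of_coercive _ (m := m - x) (by linarith)
      intro v
      have h1 : (B - algebraMap ℝ (H →L[ℂ] H) x) v = B v - x • v := by
        simp [Algebra.algebraMap_eq_smul_one]
      have hsm : (x • v : H) = ((x : ℂ) • v) := RCLike.real_smul_eq_coe_smul (K := ℂ) x v
      have h2 : (inner ℂ ((B - algebraMap ℝ (H →L[ℂ] H) x) v) v : ℂ).re
          = (inner ℂ (B v) v : ℂ).re - x * ‖v‖ ^ 2 := by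
        rw [h1, inner_sub_left, hsm, inner_smul_left, inner_self_eq_norm_sq_to_K]
        rw [Complex.conj_ofReal]
        simp [Complex.sub_re, Complex.mul_re, ← Complex.ofReal_pow]
      rw [h2]
      have := hco v
      nlinarith [sq_nonneg ‖v‖]
    have hneg : IsUnit (algebraMap ℝ (H →L[ℂ] H) x - B) := by
      have := hunit.neg
      rwa [neg_sub] at this
    exact spectrum.notMem_iff.mpr hneg hx
  -- the inverse square root of B via continuous functional calculus
  set f : ℝ → ℝ := fun x => (Real.sqrt x)⁻¹ with hf
  have hfc : ContinuousOn f (spectrum ℝ B) := by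
    apply ContinuousOn.inv₀ Real.continuous_sqrt.continuousOn
    intro x hx
    have hmx := hspecB x hx
    exact (Real.sqrt_pos.mpr (by linarith)).ne'
  set W := cfc f B with hW
  have hWsa : IsSelfAdjoint W := cfc_predicate f B
  have hcommWB : Commute W B := by
    have := cfc_commute_cfc f id B
    rwa [cfc_id ℝ B] at this
  have hWWB : W * W * B = 1 := by
    have h2 : cfc (fun x : ℝ => f x * f x) B = W * W := cfc_mul f f B hfc hfc
    calc W * W * B = cfc (fun x : ℝ => f x * f x) B * cfc (id : ℝ → ℝ) B := by
          rw [h2, cfc_id ℝ B]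
      _ = cfc (fun x : ℝ => (f x * f x) * id x) B :=
          (cfc_mul (fun x : ℝ => f x * f x) (id : ℝ → ℝ) B (hfc.mul hfc) continuousOn_id).symm
      _ = cfc (1 : ℝ → ℝ) B := by
          apply cfc_congr
          intro x hx
          have hmx := hspecB x hx
          have hxpos : 0 < x := lt_of_lt_of_le hmpos hmx
          have hs : Real.sqrt x * Real.sqrt x = x := Real.mul_self_sqrt hxpos.le
          show (Real.sqrt x)⁻¹ * (Real.sqrt x)⁻¹ * x = 1
          rw [← mul_inv, hs]
          exact inv_mul_cancel₀ hxpos.ne'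
      _ = 1 := cfc_one ℝ B
  have hBWW : B * (W * W) = 1 := by
    have hcomm2 : Commute (W * W) B := hcommWB.mul_left hcommWB
    rw [← hcomm2.eq]
    exact hWWB
  have hB𝒜 : B ∈ 𝒜 := by
    have hTad𝒜 : Tad ∈ 𝒜 := by rw [← hstarT]; exact star_mem hT
    exact sub_mem (add_mem (mul_mem hTad𝒜 hT) (one_mem _)) hP
  have hW𝒜 : W ∈ 𝒜 := aux_cfc_mem 𝒜 h𝒜closed B hB𝒜 hBsa f hfc
  -- commutation of W with P, via the centralizer of P
  have hPBc : P * B = B * P := by rw [hPB, hBP]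
  set 𝒞 : StarSubalgebra ℂ (H →L[ℂ] H) := StarSubalgebra.centralizer ℂ {P} with hC
  have hCcl : IsClosed (𝒞 : Set (H →L[ℂ] H)) := by
    have hset : (𝒞 : Set (H →L[ℂ] H))
        = {z | P * z = z * P} ∩ {z | star P * z = z * star P} := by
      ext z
      simp only [hC, SetLike.mem_coe, StarSubalgebra.mem_centralizer_iff,
        Set.mem_singleton_iff, forall_eq, Set.mem_inter_iff, Set.mem_setOf_eq]
    rw [hset]
    exact (isClosed_eq (continuous_const.mul continuous_id)
        (continuous_id.mul continuous_const)).inter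
      (isClosed_eq (continuous_const.mul continuous_id)
        (continuous_id.mul continuous_const))
  have hB𝒞 : B ∈ 𝒞 := by
    rw [hC, StarSubalgebra.mem_centralizer_iff]
    intro g hg
    rw [Set.mem_singleton_iff] at hg
    subst hg
    exact ⟨hPBc, by rw [hstarP]; exact hPBc⟩
  have hW𝒞 : W ∈ 𝒞 := aux_cfc_mem 𝒞 hCcl B hB𝒞 hBsa f hfc
  have hPW : P * W = W * P := by
    rw [hC, StarSubalgebra.mem_centralizer_iff] at hW𝒞
    exact (hW𝒞 P rfl).1
  -- the partial isometry
  have hadj : ContinuousLinearMap.adjoint (T * W) = W * Tad := by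
    rw [← ContinuousLinearMap.star_eq_adjoint, star_mul, hstarT, hWsa.star_eq]
  refine ⟨T * W, mul_mem hT hW𝒜, ?_, ?_⟩
  · -- adjoint (T * W) * (T * W) = P
    rw [hadj]
    calc W * Tad * (T * W) = W * A * W := by rw [hA]; noncomm_ring
      _ = W * B * (P * W) := by rw [← hBP]; noncomm_ring
      _ = W * B * (W * P) := by rw [hPW]
      _ = W * (B * W) * P := by noncomm_ring
      _ = W * (W * B) * P := by rw [← hcommWB.eq]
      _ = W * W * B * P := by noncomm_ring
      _ = 1 * P := by rw [hWWB]
      _ = P := one_mul P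
  · -- (T * W) * adjoint (T * W) = Q
    rw [hadj]
    have hRT : T * W * (W * Tad) * T = T := by
      calc T * W * (W * Tad) * T = T * (W * W) * A := by rw [hA]; noncomm_ring
        _ = T * (W * W) * (B * P) := by rw [hBP]
        _ = T * (W * W * B) * P := by noncomm_ring
        _ = T * 1 * P := by rw [hWWB]
        _ = T := by rw [mul_one, hTP]
    have hQR : Q * (T * W * (W * Tad)) = T * W * (W * Tad) := by
      calc Q * (T * W * (W * Tad)) = (Q * T) * (W * (W * Tad)) := by noncomm_ring
        _ = T * W * (W * Tad) := by rw [hQT]; noncomm_ring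
    have hRQ : T * W * (W * Tad) * Q = Q := by
      ext x
      have hQx : Q x ∈ Set.range Q := ⟨x, rfl⟩
      rw [← honto] at hQx
      obtain ⟨p, hp, hpx⟩ := hQx
      have hPp : P p = p := by
        obtain ⟨z, rfl⟩ := hp
        have := congrArg (fun S : H →L[ℂ] H => S z) hPproj
        simpa using this
      have e : (T * W * (W * Tad) * Q) x = (T * W * (W * Tad) * T) p := by
        simp only [ContinuousLinearMap.mul_apply]
        rw [← hpx]
      show (T * W * (W * Tad) * Q) x = Q x
      rw [e, hRT]
      exact hpx
    have hRsa : star (T * W * (W * Tad)) = T * W * (W * Tad) := by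
      rw [star_mul, star_mul, star_mul, hWsa.star_eq, hstarT, ← hstarT, star_star]
    have hQRQ : Q * (T * W * (W * Tad)) = Q := by
      have := congrArg star hRQ
      rwa [star_mul, hRsa, hstarQ] at this
    rw [← hQR, hQRQ]
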